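/- Let 0 < u_min ≤ u_max and L > 0. Let (u_n)_{n∈ℕ} be a sequence of functions u_n : ℝ → ℝ with u_n(x) ∈ [u_min, u_max] for every x ∈ ℝ and Lip⁻ u_n ≤ L for every n. Then there exist a subsequence (u_{n_k}) and a function u : ℝ → ℝ with u(x) ∈ [u_min, u_max] for every x and Lip⁻ u ≤ L, such that u_{n_k}(x) → u(x) for every x ∈ ℝ and ∫_{−R}^{R} |u_{n_k}(x) − u(x)| dx → 0 for every R > 0. -/

import Mathlib

open MeasureTheory Filter

/-- Extraction of a pointwise convergent subsequence on a countable index set,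
for uniformly bounded sequences. -/
lemma extract_subseq {ι : Type*} [Countable ι] (a b : ℝ) (f : ℕ → ι → ℝ)
    (hf : ∀ n i, f n i ∈ Set.Icc a b) :
    ∃ φ : ℕ → ℕ, StrictMono φ ∧ ∃ g : ι → ℝ,
      ∀ i, Tendsto (fun k => f (φ k) i) atTop (nhds (g i)) := by
  let F : ℕ → ι → Set.Icc a b := fun n i => ⟨f n i, hf n i⟩
  obtain ⟨G, φ, hφ, hconv⟩ := CompactSpace.tendsto_subseq F
  refine ⟨φ, hφ, fun i => (G i : ℝ), fun i => ?_⟩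
  have h1 : Tendsto (fun k => F (φ k) i) atTop (nhds (G i)) :=
    tendsto_pi_nhds.1 hconv i
  exact (continuous_subtype_val.tendsto _).comp h1

/-- Compactness in `L¹_loc` of the admissible set
`{u : u(x) ∈ [u_min, u_max], Lip⁻ u ≤ L}`: every sequence admits a subsequence
converging pointwise and in `L¹` on every compact interval to a limit in the set. -/
theorem stmt1 (umin umax L : ℝ) (humin : 0 < umin) (h2 : umin ≤ umax) (hL : 0 < L)
    (u : ℕ → ℝ → ℝ)
    (hbound : ∀ n x, u n x ∈ Set.Icc umin umax)
    (hlip : ∀ n x y, x < y → u n x - u n y ≤ L * (y - x)) :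
    ∃ φ : ℕ → ℕ, StrictMono φ ∧ ∃ v : ℝ → ℝ,
      (∀ x, v x ∈ Set.Icc umin umax) ∧
      (∀ x y, x < y → v x - v y ≤ L * (y - x)) ∧
      (∀ x, Tendsto (fun k => u (φ k) x) atTop (nhds (v x))) ∧
      (∀ R > 0, Tendsto (fun k => ∫ x in (-R)..R, |u (φ k) x - v x|) atTop (nhds 0)) := by
  classical
  -- the shifted functions are monotone
  have hmono : ∀ n, Monotone (fun x => u n x + L * x) := by
    intro n x y hxy
    rcases eq_or_lt_of_le hxy with rfl | h
    · exact le_rfl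
    · have h3 := hlip n x y h
      simp only
      nlinarith
  -- first extraction : convergence on ℚ
  obtain ⟨φ₀, hφ₀, w, hw⟩ := extract_subseq umin umax (fun n (q : ℚ) => u n q)
    (fun n q => hbound n q)
  have hwlb : ∀ q : ℚ, umin ≤ w q := fun q =>
    ge_of_tendsto (hw q) (Eventually.of_forall fun k => (hbound _ _).1)
  have hwub : ∀ q : ℚ, w q ≤ umax := fun q =>
    le_of_tendsto (hw q) (Eventually.of_forall fun k => (hbound _ _).2)
  set W : ℚ → ℝ := fun q => w q + L * q with hWdef
  have hWtendsto : ∀ q : ℚ, Tendsto (fun k => u (φ₀ k) q + L * q) atTop (nhds (W q)) :=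
    fun q => (hw q).add tendsto_const_nhds
  have hWmono : ∀ p q : ℚ, (p : ℝ) ≤ (q : ℝ) → W p ≤ W q := by
    intro p q hpq
    refine le_of_tendsto_of_tendsto' (hWtendsto p) (hWtendsto q) fun k => ?_
    exact hmono (φ₀ k) hpq
  -- the envelope G
  set S : ℝ → Set ℝ := fun x => W '' {q : ℚ | x < (q : ℝ)} with hSdef
  have hSne : ∀ x, (S x).Nonempty := by
    intro x
    obtain ⟨q, hq⟩ := exists_rat_gt x
    exact ⟨W q, q, hq, rfl⟩
  have hSbdd : ∀ x, BddBelow (S x) := by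
    intro x
    refine ⟨umin + L * x, ?_⟩
    rintro r ⟨q, hq, rfl⟩
    have := hwlb q
    simp only [Set.mem_setOf_eq] at hq
    have : L * x ≤ L * q := by nlinarith
    simp only [hWdef]
    nlinarith [hwlb q]
  set G : ℝ → ℝ := fun x => sInf (S x) with hGdef
  have hGmono : Monotone G := by
    intro x y hxy
    refine csInf_le_csInf (hSbdd x) (hSne y) ?_
    rintro r ⟨q, hq, rfl⟩
    exact ⟨q, lt_of_le_of_lt hxy hq, rfl⟩
  have hGle : ∀ (x : ℝ) (q : ℚ), x < (q : ℝ) → G x ≤ W q := by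
    intro x q hq
    exact csInf_le (hSbdd x) ⟨q, hq, rfl⟩
  -- convergence at continuity points of G
  have hA : ∀ x, ContinuousAt G x →
      Tendsto (fun k => u (φ₀ k) x + L * x) atTop (nhds (G x)) := by
    intro x hx
    refine tendsto_order.2 ⟨?_, ?_⟩
    · intro c hc
      have h1 : ∀ᶠ z in nhds x, c < G z := hx.eventually_const_lt hc
      have h2 : ∀ᶠ z in nhdsWithin x (Set.Iio x), c < G z :=
        h1.filter_mono nhdsWithin_le_nhds
      obtain ⟨z, hcz, hzx⟩ := (h2.and eventually_mem_nhdsWithin).exists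
      obtain ⟨p, hp1, hp2⟩ := exists_rat_btwn (show z < x from hzx)
      have hWp : G z ≤ W p := hGle z p hp1
      have h4 : ∀ᶠ k in atTop, c < u (φ₀ k) p + L * p :=
        (hWtendsto p).eventually_const_lt (lt_of_lt_of_le hcz hWp)
      filter_upwards [h4] with k hk
      have := hmono (φ₀ k) (le_of_lt hp2)
      exact lt_of_lt_of_le hk this
    · intro c hc
      obtain ⟨r, ⟨q, hq, rfl⟩, hr⟩ := exists_lt_of_csInf_lt (hSne x) hc
      have h4 : ∀ᶠ k in atTop, u (φ₀ k) q + L * q < c :=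
        (hWtendsto q).eventually_lt_const hr
      filter_upwards [h4] with k hk
      have := hmono (φ₀ k) (le_of_lt hq)
      exact lt_of_le_of_lt this hk
  -- second extraction on the (countable) discontinuity set of G
  have hD : Set.Countable {x : ℝ | ¬ContinuousAt G x} := hGmono.countable_not_continuousAt
  haveI := hD.to_subtype
  obtain ⟨φ₁, hφ₁, z, hz⟩ := extract_subseq umin umax
    (fun k (x : {x : ℝ | ¬ContinuousAt G x}) => u (φ₀ k) x)
    (fun k x => hbound _ _)
  set v : ℝ → ℝ := fun x =>
    if h : ContinuousAt G x then G x - L * x else z ⟨x, h⟩ with hvdef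
  -- pointwise convergence of the composed subsequence
  have hconv : ∀ x, Tendsto (fun k => u (φ₀ (φ₁ k)) x) atTop (nhds (v x)) := by
    intro x
    by_cases h : ContinuousAt G x
    · have h1 := (hA x h).comp (hφ₁.tendsto_atTop)
      have h2 := h1.sub (tendsto_const_nhds (x := L * x))
      simp only [hvdef, dif_pos h]
      simpa using h2
    · have := hz ⟨x, h⟩
      simp only [hvdef, dif_neg h]
      exact this
  have hvmem : ∀ x, v x ∈ Set.Icc umin umax := by
    intro x
    constructor
    · exact ge_of_tendsto (hconv x) (Eventually.of_forall fun k => (hbound _ _).1)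
    · exact le_of_tendsto (hconv x) (Eventually.of_forall fun k => (hbound _ _).2)
  have hvlip : ∀ x y, x < y → v x - v y ≤ L * (y - x) := by
    intro x y hxy
    exact le_of_tendsto ((hconv x).sub (hconv y))
      (Eventually.of_forall fun k => hlip _ x y hxy)
  -- measurability
  have hmeas : ∀ n, Measurable (u n) := by
    intro n
    have h1 : Measurable (fun x => u n x + L * x) := (hmono n).measurable
    have h2 := h1.sub ((measurable_const (a := L)).mul measurable_id)
    convert h2 using 1; funext x; simp
  have hvmeas : Measurable v :=
    measurable_of_tendsto_metrizable' atTop (fun k => hmeas (φ₀ (φ₁ k)))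
      (tendsto_pi_nhds.2 hconv)
  refine ⟨φ₀ ∘ φ₁, hφ₀.comp hφ₁, v, hvmem, hvlip, hconv, ?_⟩
  intro R hR
  have key := intervalIntegral.tendsto_integral_filter_of_dominated_convergence
    (μ := volume) (a := -R) (b := R) (l := atTop)
    (F := fun k x => |u (φ₀ (φ₁ k)) x - v x|) (f := fun _ => (0 : ℝ))
    (bound := fun _ => umax - umin)
    (Eventually.of_forall fun k =>
      (((hmeas (φ₀ (φ₁ k))).sub hvmeas).abs.aestronglyMeasurable).restrict)
    (Eventually.of_forall fun k => ae_of_all _ fun x _ => by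
      obtain ⟨ha1, ha2⟩ := hbound (φ₀ (φ₁ k)) x
      obtain ⟨hb1, hb2⟩ := hvmem x
      show ‖|u (φ₀ (φ₁ k)) x - v x|‖ ≤ umax - umin
      rw [Real.norm_eq_abs, abs_abs, abs_le]
      constructor <;> linarith)
    intervalIntegrable_const
    (ae_of_all _ fun x _ => by
      have h1 := ((hconv x).sub (tendsto_const_nhds (x := v x))).abs
      simpa using h1)
  simpa using key
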